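/- Let r be an odd positive integer, let k ≥ 1 and 0 ≤ t ≤ (r+1)/2 be integers, and let s, L be positive integers such that k(k+1) divides s and 2k(k+1)·L ≥ ((r+3)(k+1)² − 2t)·s. Then there exists an (L,s,r) PPRIC code with exactly ((r+3)(k+1))/2 + t codewords. -/

import Mathlib

open Finset

def ind {L : ℕ} (S : Finset (Fin L)) : Fin L → ZMod 2 := fun x => if x ∈ S then 1 else 0

lemma zmod2_cases (a : ZMod 2) : a = 0 ∨ a = 1 := by fin_cases a; exacts [Or.inl rfl, Or.inr rfl]

lemma hammingNorm_ind {L : ℕ} (S : Finset (Fin L)) : hammingNorm (ind S) = S.card := by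
  unfold hammingNorm ind
  congr 1
  ext x
  by_cases h : x ∈ S <;> simp [h]

lemma hammingDist_ind {L : ℕ} (S : Finset (Fin L)) (y : Fin L → ZMod 2) :
    hammingDist (ind S) y + 2 * (S ∩ (univ.filter (fun x => y x ≠ 0))).card
      = S.card + hammingNorm y := by
  classical
  set Y : Finset (Fin L) := univ.filter (fun x => y x ≠ 0) with hY
  have hfil : (univ.filter fun x => ind S x ≠ y x) = (S \ Y) ∪ (Y \ S) := by
    ext x
    rw [Finset.mem_filter]
    have hy : y x = 0 ∨ y x = 1 := zmod2_cases _
    by_cases h : x ∈ S <;> rcases hy with hy | hy <;>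
      simp [ind, h, hY, hy]
  have hd : hammingDist (ind S) y = (S \ Y).card + (Y \ S).card := by
    unfold hammingDist
    rw [hfil, card_union_of_disjoint]
    exact disjoint_sdiff_sdiff
  have h1 : (S \ Y).card + (S ∩ Y).card = S.card := card_sdiff_add_card_inter S Y
  have h2 : (Y \ S).card + (Y ∩ S).card = Y.card := card_sdiff_add_card_inter Y S
  have h3 : hammingNorm y = Y.card := by
    unfold hammingNorm; rfl
  rw [hd, h3, inter_comm S Y] at *
  omega


def mf (k t i : ℕ) : ℕ := if i < t then k+2 else k+1
def nf (k t s i : ℕ) : ℕ := if i < t then s/(k+1) else s/k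

abbrev TT (g k t s : ℕ) := Σ i : Fin g, Fin (mf k t i) × Fin (nf k t s i)

section core
variable {g k t s : ℕ}

def SC (Yt : Finset (TT g k t s)) (i : Fin g) : ℕ :=
  (Yt.filter (fun q => q.1 = i)).card

def cC (Yt : Finset (TT g k t s)) (i : Fin g) (jv : ℕ) : ℕ :=
  ((Yt.filter (fun q => q.1 = i)).filter (fun q => (q.2.1 : ℕ) = jv)).card

def aC (Yt : Finset (TT g k t s)) (i : Fin g) (jv : ℕ) : ℕ :=
  ((Yt.filter (fun q => q.1 = i)).filter (fun q => (q.2.1 : ℕ) ≠ jv)).card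

lemma cC_add_aC (Yt : Finset (TT g k t s)) (i : Fin g) (jv : ℕ) :
    cC Yt i jv + aC Yt i jv = SC Yt i :=
  card_filter_add_card_filter_not _

lemma SC_eq_sum_cC (Yt : Finset (TT g k t s)) (i : Fin g) :
    SC Yt i = ∑ jv ∈ range (mf k t i), cC Yt i jv := by
  apply card_eq_sum_card_fiberwise (f := fun q : TT g k t s => (q.2.1 : ℕ))
  rintro ⟨i', p⟩ hq
  simp only [mem_coe, mem_filter] at hq
  obtain ⟨-, rfl⟩ := hq
  exact mem_range.2 p.1.isLt

lemma sum_SC (Yt : Finset (TT g k t s)) :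
    Yt.card = ∑ i : Fin g, SC Yt i := by
  apply card_eq_sum_card_fiberwise (f := fun q : TT g k t s => q.1)
  intro q _; exact mem_univ _

lemma cC_le (Yt : Finset (TT g k t s)) (i : Fin g) (j : Fin (mf k t i)) :
    cC Yt i (j : ℕ) ≤ nf k t s i := by
  have hsub : (Yt.filter (fun q => q.1 = i)).filter (fun q => (q.2.1 : ℕ) = (j : ℕ))
      ⊆ (univ : Finset (Fin (nf k t s i))).image (fun p => (⟨i, (j, p)⟩ : TT g k t s)) := by
    rintro ⟨i', p⟩ hq
    simp only [mem_filter] at hq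
    obtain ⟨⟨-, rfl⟩, hv⟩ := hq
    have hj : p.1 = j := Fin.ext hv
    refine mem_image.2 ⟨p.2, mem_univ _, ?_⟩
    rw [← hj]
  calc cC Yt i (j : ℕ) ≤ _ := card_le_card hsub
    _ ≤ (univ : Finset (Fin (nf k t s i))).card := card_image_le
    _ = nf k t s i := by simp

lemma SC_univ (i : Fin g) :
    SC (univ : Finset (TT g k t s)) i = mf k t i * nf k t s i := by
  have himg : (univ : Finset (TT g k t s)).filter (fun q => q.1 = i)
      = (univ : Finset (Fin (mf k t i) × Fin (nf k t s i))).image (Sigma.mk i) := by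
    ext ⟨i', p⟩
    simp only [mem_filter, mem_univ, true_and, mem_image]
    constructor
    · rintro rfl; exact ⟨p, rfl⟩
    · rintro ⟨p', h⟩; cases h; rfl
  rw [SC, himg, card_image_of_injective _ sigma_mk_injective]
  simp

lemma cC_univ (i : Fin g) (j : Fin (mf k t i)) :
    cC (univ : Finset (TT g k t s)) i (j : ℕ) = nf k t s i := by
  have himg : ((univ : Finset (TT g k t s)).filter (fun q => q.1 = i)).filter
        (fun q => (q.2.1 : ℕ) = (j : ℕ))
      = (univ : Finset (Fin (nf k t s i))).image (fun p => (⟨i, (j, p)⟩ : TT g k t s)) := by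
    ext ⟨i', p⟩
    simp only [mem_filter, mem_univ, true_and, mem_image]
    constructor
    · rintro ⟨rfl, hv⟩
      have hj : p.1 = j := Fin.ext hv
      exact ⟨p.2, by rw [← hj]⟩
    · rintro ⟨p', h⟩
      cases h
      exact ⟨rfl, rfl⟩
  rw [cC, himg, card_image_of_injective, card_univ, Fintype.card_fin]
  intro a b hab
  have h2 := sigma_mk_injective hab
  simpa using h2
end core

lemma mf_pos (k t i : ℕ) : 0 < mf k t i := by unfold mf; split <;> omega

lemma core_cover {g k t s : ℕ} (r : ℕ) (hg : 2 * g = r + 3) (hrpos : 0 < r)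
    (Yt : Finset (TT g k t s)) (w : ℕ) (hw1 : r < w) (hw2 : Yt.card ≤ w) :
    ∃ (i : Fin g) (j : Fin (mf k t i)), r + 2 * aC Yt i (j : ℕ) < w := by
  have hgpos : 0 < g := by omega
  have hne : ∀ i : Fin g, (univ : Finset (Fin (mf k t i))).Nonempty := by
    intro i
    exact ⟨⟨0, mf_pos k t i⟩, mem_univ _⟩
  have hJ : ∀ i : Fin g, ∃ j : Fin (mf k t i),
      ∀ j' : Fin (mf k t i), cC Yt i (j' : ℕ) ≤ cC Yt i (j : ℕ) := by
    intro i
    obtain ⟨j, -, hj⟩ := exists_max_image univ (fun j : Fin (mf k t i) => cC Yt i (j : ℕ)) (hne i)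
    exact ⟨j, fun j' => hj j' (mem_univ _)⟩
  choose J hJmax using hJ
  set a : Fin g → ℕ := fun i => aC Yt i (J i : ℕ) with ha
  have haeq : ∀ i, a i = aC Yt i (J i : ℕ) := fun i => rfl
  by_cases hzero : ∃ i, a i = 0
  · obtain ⟨i, hi⟩ := hzero
    refine ⟨i, J i, ?_⟩
    rw [← haeq i]
    omega
  push_neg at hzero
  have hone : ∀ i, 1 ≤ a i := fun i => Nat.one_le_iff_ne_zero.2 (hzero i)
  -- max bound : SC ≤ mf * cC(J i)
  have hmax : ∀ i : Fin g, SC Yt i ≤ mf k t i * cC Yt i (J i : ℕ) := by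
    intro i
    rw [SC_eq_sum_cC]
    calc ∑ jv ∈ range (mf k t i), cC Yt i jv
        ≤ (range (mf k t i)).card • cC Yt i (J i : ℕ) := by
          apply sum_le_card_nsmul
          intro jv hjv
          rw [mem_range] at hjv
          exact hJmax i ⟨jv, hjv⟩
      _ = mf k t i * cC Yt i (J i : ℕ) := by rw [card_range, smul_eq_mul]
  have hSC : ∀ i, a i + 1 ≤ SC Yt i := by
    intro i
    have h1 := cC_add_aC Yt i (J i : ℕ)
    rw [← haeq i] at h1
    have h2 := hmax i
    have h3 := hone i
    rcases Nat.eq_zero_or_pos (cC Yt i (J i : ℕ)) with h | h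
    · rw [h] at h1 h2; simp only [Nat.mul_zero, Nat.le_zero] at h2; omega
    · omega
  -- choose minimizing i
  obtain ⟨i0, -, hi0⟩ := exists_min_image (univ : Finset (Fin g))
    a ⟨⟨0, hgpos⟩, mem_univ _⟩
  have hbig : g * (a i0 + 1) ≤ Yt.card := by
    rw [sum_SC Yt]
    calc g * (a i0 + 1) = (univ : Finset (Fin g)).card • (a i0 + 1) := by
          rw [card_univ, Fintype.card_fin, smul_eq_mul]
      _ ≤ ∑ i : Fin g, (a i + 1) := by
          apply card_nsmul_le_sum
          intro i _
          have := hi0 i (mem_univ _)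
          omega
      _ ≤ ∑ i : Fin g, SC Yt i := sum_le_sum (fun i _ => hSC i)
  refine ⟨i0, J i0, ?_⟩
  rw [← haeq i0]
  have ha0 : 1 ≤ a i0 := hone i0
  have key : r + 2 * a i0 + 1 ≤ g * (a i0 + 1) := by nlinarith [hone i0]
  omega

lemma nf_pos {k t s : ℕ} (hk : 1 ≤ k) (hs : 0 < s) (hdvd : k * (k+1) ∣ s) (i : ℕ) :
    0 < nf k t s i := by
  have h1 : (k+1) ∣ s := dvd_trans ⟨k, mul_comm _ _⟩ hdvd
  have h2 : k ∣ s := dvd_trans ⟨k+1, rfl⟩ hdvd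
  unfold nf
  split
  · exact Nat.div_pos (Nat.le_of_dvd hs h1) (by omega)
  · exact Nat.div_pos (Nat.le_of_dvd hs h2) (by omega)

lemma mf_mul_nf {k t s : ℕ} (hk : 1 ≤ k) (hdvd : k * (k+1) ∣ s) (i : ℕ) :
    mf k t i * nf k t s i = s + nf k t s i := by
  have h1 : (k+1) ∣ s := dvd_trans ⟨k, mul_comm _ _⟩ hdvd
  have h2 : k ∣ s := dvd_trans ⟨k+1, rfl⟩ hdvd
  have e1 : (k+1) * (s/(k+1)) = s := Nat.mul_div_cancel' h1
  have e2 : k * (s/k) = s := Nat.mul_div_cancel' h2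
  unfold mf nf
  split
  · calc (k+2) * (s/(k+1)) = (k+1) * (s/(k+1)) + s/(k+1) := by ring
      _ = s + s/(k+1) := by rw [e1]
  · calc (k+1) * (s/k) = k * (s/k) + s/k := by ring
      _ = s + s/k := by rw [e2]

lemma aC_univ {g k t s : ℕ} (hk : 1 ≤ k) (hdvd : k * (k+1) ∣ s)
    (i : Fin g) (j : Fin (mf k t i)) :
    aC (univ : Finset (TT g k t s)) i (j : ℕ) = s := by
  have h1 := cC_add_aC (univ : Finset (TT g k t s)) i (j : ℕ)
  rw [SC_univ, cC_univ, mf_mul_nf hk hdvd] at h1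
  omega

section assemble
variable {g k t s L : ℕ}

def AAset (g k t s : ℕ) (i : Fin g) (j : Fin (mf k t i)) : Finset (TT g k t s) :=
  ((univ : Finset (TT g k t s)).filter (fun q => q.1 = i)).filter
    (fun q => (q.2.1 : ℕ) ≠ (j : ℕ))

def suppS (e : TT g k t s ↪ Fin L) (i : Fin g) (j : Fin (mf k t i)) : Finset (Fin L) :=
  (AAset g k t s i j).image e

def cw (e : TT g k t s ↪ Fin L) (i : Fin g) (j : Fin (mf k t i)) : Fin L → ZMod 2 :=
  ind (suppS e i j)

lemma card_suppS (hk : 1 ≤ k) (hdvd : k * (k+1) ∣ s) (e : TT g k t s ↪ Fin L)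
    (i : Fin g) (j : Fin (mf k t i)) : (suppS e i j).card = s := by
  rw [suppS, card_image_of_injective _ e.injective]
  exact aC_univ hk hdvd i j

lemma norm_cw (hk : 1 ≤ k) (hdvd : k * (k+1) ∣ s) (e : TT g k t s ↪ Fin L)
    (i : Fin g) (j : Fin (mf k t i)) : hammingNorm (cw e i j) = s := by
  rw [cw, hammingNorm_ind, card_suppS hk hdvd]

lemma ind_inj : Function.Injective (ind (L := L)) := by
  intro S S' h
  ext x
  have hx := congrFun h x
  simp only [ind] at hx
  constructor
  · intro h1
    by_contra h2
    rw [if_pos h1, if_neg h2] at hx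
    exact one_ne_zero hx
  · intro h2
    by_contra h1
    rw [if_neg h1, if_pos h2] at hx
    exact one_ne_zero hx.symm

lemma mem_AAset {i : Fin g} {j : Fin (mf k t i)} (q : TT g k t s) :
    q ∈ AAset g k t s i j ↔ q.1 = i ∧ (q.2.1 : ℕ) ≠ (j : ℕ) := by
  simp only [AAset, mem_filter, mem_univ, true_and]

lemma cw_inj (hk : 1 ≤ k) (hs : 0 < s) (hdvd : k * (k+1) ∣ s) (e : TT g k t s ↪ Fin L)
    {i i' : Fin g} {j : Fin (mf k t i)} {j' : Fin (mf k t i')}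
    (h : cw e i j = cw e i' j') : (⟨i, j⟩ : Σ i : Fin g, Fin (mf k t i)) = ⟨i', j'⟩ := by
  have hS : AAset g k t s i j = AAset g k t s i' j' :=
    Finset.image_injective e.injective (ind_inj h)
  have hmf2 : ∀ iv : ℕ, 2 ≤ mf k t iv := by intro iv; unfold mf; split <;> omega
  have hnf1 : ∀ iv : ℕ, 0 < nf k t s iv := fun iv => nf_pos hk hs hdvd iv
  -- pick an alternative cell index in group i distinct from j
  have hjalt : ∃ jv : ℕ, jv < mf k t i ∧ jv ≠ (j : ℕ) := by
    have := hmf2 (i : ℕ)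
    by_cases h0 : (j : ℕ) = 0
    · exact ⟨1, by omega, by omega⟩
    · exact ⟨0, by omega, fun hh => h0 hh.symm⟩
  obtain ⟨jv, hjv1, hjv2⟩ := hjalt
  have hq : (⟨i, (⟨jv, hjv1⟩, ⟨0, hnf1 i⟩)⟩ : TT g k t s) ∈ AAset g k t s i j :=
    (mem_AAset _).2 ⟨rfl, hjv2⟩
  rw [hS] at hq
  obtain ⟨hq1, -⟩ := (mem_AAset _).1 hq
  obtain rfl : i = i' := hq1
  -- now show j = j'
  congr 1
  by_contra hne
  have hvne : (j' : ℕ) ≠ (j : ℕ) := fun hv => hne (Fin.ext hv).symm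
  have hq2 : (⟨i, (j', ⟨0, hnf1 i⟩)⟩ : TT g k t s) ∈ AAset g k t s i j :=
    (mem_AAset _).2 ⟨rfl, hvne⟩
  rw [hS] at hq2
  obtain ⟨-, hbad⟩ := (mem_AAset _).1 hq2
  exact hbad rfl

lemma inter_transfer (e : TT g k t s ↪ Fin L) (y : Fin L → ZMod 2)
    (i : Fin g) (j : Fin (mf k t i)) :
    (suppS e i j ∩ (univ.filter (fun x => y x ≠ 0))).card
      = aC (univ.filter (fun q : TT g k t s => y (e q) ≠ 0)) i (j : ℕ) := by
  classical
  have himg : suppS e i j ∩ (univ.filter (fun x => y x ≠ 0))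
      = ((AAset g k t s i j).filter (fun q => y (e q) ≠ 0)).image e := by
    ext x
    simp only [mem_inter, suppS, mem_image, mem_filter, mem_univ, true_and]
    constructor
    · rintro ⟨⟨q, hq, rfl⟩, hyx⟩
      exact ⟨q, ⟨hq, hyx⟩, rfl⟩
    · rintro ⟨q, ⟨hq, hyq⟩, rfl⟩
      exact ⟨⟨q, hq, rfl⟩, hyq⟩
  rw [himg, card_image_of_injective _ e.injective]
  congr 1
  ext q
  simp only [AAset, aC, mem_filter, mem_univ, true_and]
  tauto

end assemble

lemma sum_split (f : ℕ → ℕ) (t g a b : ℕ) (h : t ≤ g)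
    (h1 : ∀ i < t, f i = a) (h2 : ∀ i, t ≤ i → i < g → f i = b) :
    ∑ i ∈ range g, f i = t * a + (g - t) * b := by
  rw [range_eq_Ico, ← Finset.sum_Ico_consecutive _ (Nat.zero_le t) h]
  have e1 : ∑ i ∈ Finset.Ico 0 t, f i = t * a := by
    rw [Finset.sum_congr rfl (fun i hi => h1 i (Finset.mem_Ico.1 hi).2), Finset.sum_const,
      Nat.card_Ico, smul_eq_mul, Nat.sub_zero]
  have e2 : ∑ i ∈ Finset.Ico t g, f i = (g - t) * b := by
    rw [Finset.sum_congr rfl (fun i hi => h2 i (Finset.mem_Ico.1 hi).1 (Finset.mem_Ico.1 hi).2),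
      Finset.sum_const, Nat.card_Ico, smul_eq_mul]
  rw [e1, e2]

lemma card_TT (g k t s : ℕ) :
    Fintype.card (TT g k t s) = ∑ i ∈ range g, mf k t i * nf k t s i := by
  rw [Fintype.card_sigma]
  simp [Fin.sum_univ_eq_sum_range (fun i => mf k t i * nf k t s i) g]

/-- The Hamming ball of radius `ρ` centered at `x` in `𝔽₂^L`. -/
def pball (L : ℕ) (x : Fin L → ZMod 2) (ρ : ℕ) : Set (Fin L → ZMod 2) :=
  {y | hammingDist x y ≤ ρ}

/-- `C` is an `(L,s,r)` PPRIC code: a set of words of Hamming weight exactly `s`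
such that `B(0,r) = ⋂_{c ∈ C} B(c, r+s)`. -/
def IsPPRIC (L s r : ℕ) (C : Set (Fin L → ZMod 2)) : Prop :=
  (∀ c ∈ C, hammingNorm c = s) ∧
  pball L 0 r = ⋂ c ∈ C, pball L c (r + s)

theorem stmt12 (r k t s L : ℕ) (hr : Odd r) (hrpos : 0 < r) (hk : 1 ≤ k)
    (ht : t ≤ (r + 1) / 2) (hs : 0 < s) (hL : 0 < L)
    (hdvd : k * (k + 1) ∣ s)
    (hineq : ((r + 3) * (k + 1) ^ 2 - 2 * t) * s ≤ 2 * k * (k + 1) * L) :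
    ∃ C : Finset (Fin L → ZMod 2),
      IsPPRIC L s r ↑C ∧ C.card = ((r + 3) * (k + 1)) / 2 + t := by
  classical
  obtain ⟨v, hv⟩ := hr
  set g := v + 2 with hgdef
  have h2g : 2 * g = r + 3 := by omega
  have htg : t ≤ g := by omega
  obtain ⟨d, hd⟩ : ∃ d, g = t + d := ⟨g - t, by omega⟩
  obtain ⟨u, hu⟩ := hdvd
  have hupos : 0 < u := by
    rcases Nat.eq_zero_or_pos u with h | h
    · rw [h, mul_zero] at hu; omega
    · exact h
  have hdiv1 : s / (k + 1) = k * u := by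
    rw [hu, mul_comm k (k+1), mul_assoc, Nat.mul_div_cancel_left _ (by omega : 0 < k + 1)]
  have hdiv2 : s / k = (k + 1) * u := by
    rw [hu, mul_assoc, Nat.mul_div_cancel_left _ (by omega : 0 < k)]
  -- total length needed
  have hsum : ∑ i ∈ range g, mf k t i * nf k t s i
      = t * ((k+2) * (k*u)) + (g - t) * ((k+1) * ((k+1)*u)) := by
    apply sum_split _ _ _ _ _ htg
    · intro i hi
      unfold mf nf
      rw [if_pos hi, if_pos hi, hdiv1]
    · intro i hi1 hi2
      unfold mf nf
      rw [if_neg (by omega), if_neg (by omega), hdiv2]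
  have h6 : 2 * t * s ≤ (r+3) * (k+1)^2 * s := by
    have ha : 2 * t ≤ r + 3 := by omega
    have hb : 1 ≤ (k+1)^2 := Nat.one_le_pow 2 (k+1) (by omega)
    have : 2 * t ≤ (r+3) * (k+1)^2 := by nlinarith
    exact Nat.mul_le_mul_right s this
  have hsubm : ((r + 3) * (k + 1) ^ 2 - 2 * t) * s
      = (r + 3) * (k + 1) ^ 2 * s - 2 * t * s := Nat.sub_mul _ _ _
  have h5 : (r+3) * (k+1)^2 * s ≤ 2 * k * (k+1) * L + 2 * t * s := by omega
  have hpos : 0 < k * (k + 1) := by positivity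
  have hkey : (r+3) * (k+1)^2 * u ≤ 2 * L + 2 * t * u := by
    apply Nat.le_of_mul_le_mul_right _ hpos
    calc (r+3) * (k+1)^2 * u * (k * (k+1)) = (r+3) * (k+1)^2 * s := by rw [hu]; ring
      _ ≤ 2 * k * (k+1) * L + 2 * t * s := h5
      _ = (2 * L + 2 * t * u) * (k * (k+1)) := by rw [hu]; ring
  have hlen : ∑ i ∈ range g, mf k t i * nf k t s i ≤ L := by
    rw [hsum, hd, Nat.add_sub_cancel_left]
    have hr3 : r + 3 = 2 * (t + d) := by omega
    have hdouble : 2 * (t * ((k+2) * (k*u)) + d * ((k+1) * ((k+1)*u))) + 2 * t * u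
        = (2 * (t + d)) * (k+1)^2 * u := by ring
    rw [hr3] at hkey
    omega
  have hcardTT : Fintype.card (TT g k t s) ≤ Fintype.card (Fin L) := by
    rw [card_TT, Fintype.card_fin]; exact hlen
  obtain ⟨e⟩ : Nonempty (TT g k t s ↪ Fin L) :=
    Function.Embedding.nonempty_iff_card_le.2 hcardTT
  have hdvd' : k * (k + 1) ∣ s := ⟨u, hu⟩
  refine ⟨(univ : Finset (Σ i : Fin g, Fin (mf k t i))).image (fun p => cw e p.1 p.2), ?_, ?_⟩
  · constructor
    · intro c hc
      obtain ⟨p, -, rfl⟩ := mem_image.1 (Finset.mem_coe.1 hc)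
      exact norm_cw hk hdvd' e p.1 p.2
    · apply Set.Subset.antisymm
      · intro y hy
        have hy' : hammingNorm y ≤ r := by
          simpa [pball, hammingDist_zero_left] using hy
        apply Set.mem_iInter₂.2
        intro c hc
        obtain ⟨p, -, rfl⟩ := mem_image.1 (Finset.mem_coe.1 hc)
        have htri := hammingDist_triangle (cw e p.1 p.2) 0 y
        rw [hammingDist_zero_right] at htri
        have hn := norm_cw hk hdvd' e p.1 p.2
        have h0y : hammingDist (0 : Fin L → ZMod 2) y = hammingNorm y :=
          congrFun hammingDist_zero_left y
        show hammingDist (cw e p.1 p.2) y ≤ r + s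
        omega
      · intro y hy
        by_contra hny
        have hw : r < hammingNorm y := by
          have : ¬ hammingDist (0 : Fin L → ZMod 2) y ≤ r := hny
          rw [hammingDist_zero_left] at this
          omega
        set Yt : Finset (TT g k t s) := univ.filter (fun q => y (e q) ≠ 0) with hYt
        have hYtcard : Yt.card ≤ hammingNorm y := by
          have himg : Yt.image e ⊆ univ.filter (fun x => y x ≠ 0) := by
            intro x hx
            obtain ⟨q, hq, rfl⟩ := mem_image.1 hx
            rw [hYt, mem_filter] at hq
            exact mem_filter.2 ⟨mem_univ _, hq.2⟩
          calc Yt.card = (Yt.image e).card := (card_image_of_injective _ e.injective).symm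
            _ ≤ (univ.filter (fun x => y x ≠ 0)).card := card_le_card himg
            _ = hammingNorm y := rfl
        obtain ⟨i, j, hij⟩ := core_cover r h2g hrpos Yt (hammingNorm y) hw hYtcard
        have hmem : cw e i j ∈ ((univ : Finset (Σ i : Fin g, Fin (mf k t i))).image
            (fun p => cw e p.1 p.2) : Finset (Fin L → ZMod 2)) :=
          mem_image.2 ⟨⟨i, j⟩, mem_univ _, rfl⟩
        have hball : hammingDist (cw e i j) y ≤ r + s :=
          Set.mem_iInter₂.1 hy (cw e i j) (Finset.mem_coe.2 hmem)
        have heq := hammingDist_ind (suppS e i j) y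
        rw [card_suppS hk hdvd', inter_transfer e y i j, ← hYt] at heq
        have hcweq : hammingDist (cw e i j) y = hammingDist (ind (suppS e i j)) y := rfl
        rw [hcweq] at hball
        omega
  · rw [card_image_of_injOn, card_univ, Fintype.card_sigma]
    · have hsum2 : ∑ i : Fin g, Fintype.card (Fin (mf k t i)) = ∑ i ∈ range g, mf k t i := by
        simp [Fin.sum_univ_eq_sum_range (fun i => mf k t i) g]
      rw [hsum2]
      have hsplit2 : ∑ i ∈ range g, mf k t i = t * (k+2) + (g - t) * (k+1) := by
        apply sum_split _ _ _ _ _ htg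
        · intro i hi; unfold mf; rw [if_pos hi]
        · intro i hi1 hi2; unfold mf; rw [if_neg (by omega)]
      rw [hsplit2]
      have h7 : (r + 3) * (k + 1) = 2 * (g * (k + 1)) := by rw [← h2g]; ring
      rw [h7, Nat.mul_div_cancel_left _ (by norm_num : 0 < 2)]
      rw [hd, Nat.add_sub_cancel_left]
      ring
    · intro p _ p' _ hpp
      have := cw_inj hk hs hdvd' e (i := p.1) (j := p.2) (i' := p'.1) (j' := p'.2) hpp
      rcases p with ⟨i, j⟩
      rcases p' with ⟨i', j'⟩
      exact this
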